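/- Let n ≥ 2 and let M_n denote the C*-algebra of n×n complex matrices. Let a ∈ M_n be a diagonal matrix with pairwise distinct non-zero real diagonal entries, and let b ∈ M_n be a self-adjoint matrix whose superdiagonal entries b_{i,i+1} are non-zero for i = 1,…,n−1. Then the pair (a, b) generates M_n as a C*-algebra; that is, the smallest closed *-subalgebra of M_n containing a and b is M_n itself. -/

import Mathlib

open Matrix Polynomial Finset

theorem aeval_diag_aux {n : ℕ} (f : Fin n → ℂ) (p : ℂ[X]) :
    aeval (Matrix.diagonal f) p = Matrix.diagonal (fun j => p.eval (f j)) := by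
  have h := Polynomial.aeval_algHom_apply (Matrix.diagonalAlgHom (n := Fin n) (α := ℂ) ℂ) f p
  rw [Matrix.diagonalAlgHom_apply] at h
  rw [h]
  have h3 : (aeval f) p = fun j => p.eval (f j) := by
    funext j
    have h2 := Polynomial.aeval_algHom_apply (Pi.evalAlgHom ℂ (fun _ : Fin n => ℂ) j) f p
    simpa [Polynomial.coe_aeval_eq_eval] using h2.symm
  rw [h3, Matrix.diagonalAlgHom_apply]

/-- Let `n ≥ 2`, let `a ∈ M_n` be a diagonal matrix with pairwise distinct
non-zero real diagonal entries, and let `b ∈ M_n` be self-adjoint with non-zero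
superdiagonal entries `b_{i,i+1}` for `i = 1, …, n−1`.  Then the pair `(a, b)` generates
`M_n` as a C*-algebra: the smallest closed `*`-subalgebra of `M_n` containing `a` and `b` is
`M_n` itself. -/
theorem diagonal_and_offdiagonal_generate {n : ℕ} (hn : 2 ≤ n)
    (d : Fin n → ℝ) (hd_inj : Function.Injective d) (hd_ne : ∀ i, d i ≠ 0)
    (a b : Matrix (Fin n) (Fin n) ℂ)
    (ha : a = Matrix.diagonal fun i => (d i : ℂ))
    (hb : IsSelfAdjoint b)
    (hb_ne : ∀ (i : ℕ) (h : i + 1 < n), b ⟨i, Nat.lt_of_succ_lt h⟩ ⟨i + 1, h⟩ ≠ 0) :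
    (NonUnitalStarAlgebra.adjoin ℂ {a, b}).topologicalClosure = ⊤ := by
  letI : OrderTop (NonUnitalStarSubalgebra ℂ (Matrix (Fin n) (Fin n) ℂ)) :=
    inferInstanceAs (OrderTop (NonUnitalStarSubalgebra ℂ (Matrix (Fin n) (Fin n) ℂ)))
  set S := NonUnitalStarAlgebra.adjoin ℂ {a, b} with hS
  -- it suffices to show the algebraic adjoin is everything
  suffices hSt : S = ⊤ by
    rw [eq_top_iff, ← hSt]
    exact S.le_topologicalClosure
  have haS : a ∈ S := NonUnitalStarAlgebra.subset_adjoin ℂ _ (by simp)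
  have hbS : b ∈ S := NonUnitalStarAlgebra.subset_adjoin ℂ _ (by simp)
  -- powers of a are in S
  have hpow : ∀ k : ℕ, a ^ (k + 1) ∈ S := by
    intro k
    induction k with
    | zero => simpa using haS
    | succ k ih => rw [pow_succ]; exact mul_mem ih haS
  -- key lemma: aeval of polys with zero constant term
  have haeval : ∀ p : ℂ[X], p.coeff 0 = 0 → aeval a p ∈ S := by
    intro p hp
    rw [Polynomial.aeval_eq_sum_range]
    apply sum_mem
    intro k hk
    rcases Nat.eq_zero_or_pos k with h0 | h0
    · subst h0; rw [hp]; simpa using zero_mem S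
    · obtain ⟨k, rfl⟩ := Nat.exists_eq_add_of_lt h0
      simpa using SMulMemClass.smul_mem _ (hpow k)
  -- the complex diagonal entries
  set dc : Fin n → ℂ := fun i => (d i : ℂ) with hdc
  have hdc_inj : Function.Injective dc := fun i j h => hd_inj (Complex.ofReal_inj.mp h)
  have hdc_ne : ∀ i, dc i ≠ 0 := fun i h => hd_ne i (by exact_mod_cast (show (d i : ℂ) = 0 from h))
  -- diagonal projections are in S
  have hE : ∀ i : Fin n, Matrix.single i i (1 : ℂ) ∈ S := by
    intro i
    set q : ℂ[X] := X * ∏ j ∈ univ.erase i, (X - C (dc j)) with hq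
    have hq0 : q.coeff 0 = 0 := by
      rw [hq, Polynomial.mul_coeff_zero, Polynomial.coeff_X_zero, zero_mul]
    have heval : ∀ k, q.eval (dc k) = dc k * ∏ j ∈ univ.erase i, (dc k - dc j) := by
      intro k; simp [hq, Polynomial.eval_prod]
    have hevi : q.eval (dc i) ≠ 0 := by
      rw [heval]
      apply mul_ne_zero (hdc_ne i)
      apply Finset.prod_ne_zero_iff.mpr
      intro j hj
      have hji : j ≠ i := (Finset.mem_erase.mp hj).1
      exact sub_ne_zero_of_ne fun h => hji (hdc_inj h.symm)
    have hevk : ∀ k, k ≠ i → q.eval (dc k) = 0 := by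
      intro k hk
      rw [heval]
      apply mul_eq_zero_of_right
      exact Finset.prod_eq_zero (Finset.mem_erase.mpr ⟨hk, Finset.mem_univ k⟩) (by ring)
    have key : aeval a q = Matrix.diagonal (fun k => q.eval (dc k)) := by
      rw [ha]; exact aeval_diag_aux dc q
    have heq : Matrix.single i i (1 : ℂ) = (q.eval (dc i))⁻¹ • aeval a q := by
      rw [key]
      ext r s
      simp only [Matrix.smul_apply, Matrix.diagonal_apply, Matrix.single, Matrix.of_apply,
        smul_eq_mul]
      by_cases hrs : r = s
      · subst hrs
        by_cases hri : r = i
        · subst hri; simp [inv_mul_cancel₀ hevi]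
        · simp [hevk r hri, Ne.symm hri]
      · simp only [if_neg hrs, mul_zero, ite_eq_right_iff, one_ne_zero, imp_false, not_and]
        intro h1 h2
        exact hrs (h1.symm.trans h2)
    rw [heq]
    exact SMulMemClass.smul_mem _ (haeval q hq0)
  -- compress b between projections
  have hEbE : ∀ i j : Fin n, Matrix.single i i (1:ℂ) * b * Matrix.single j j 1
      = Matrix.single i j (b i j) := by
    intro i j
    ext r s
    by_cases hr : r = i
    · subst hr
      by_cases hs : s = j
      · subst hs; simp
      · simp [hs, Ne.symm hs]
    · simp [Matrix.mul_assoc, hr, Ne.symm hr]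
  -- superdiagonal units
  have hstep : ∀ (i : ℕ) (h : i + 1 < n),
      Matrix.single (⟨i, Nat.lt_of_succ_lt h⟩ : Fin n) ⟨i + 1, h⟩ (1:ℂ) ∈ S := by
    intro i h
    set i0 : Fin n := ⟨i, Nat.lt_of_succ_lt h⟩
    set i1 : Fin n := ⟨i + 1, h⟩
    have hne := hb_ne i h
    have heq : Matrix.single i0 i1 (1:ℂ)
        = (b i0 i1)⁻¹ • (Matrix.single i0 i0 (1:ℂ) * b * Matrix.single i1 i1 1) := by
      rw [hEbE, Matrix.smul_single, smul_eq_mul, inv_mul_cancel₀ hne]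
    rw [heq]
    exact SMulMemClass.smul_mem _ (mul_mem (mul_mem (hE i0) hbS) (hE i1))
  -- chains give all upper-triangular units
  have hup : ∀ (k : ℕ) (i j : Fin n), (j : ℕ) = (i : ℕ) + k → Matrix.single i j (1:ℂ) ∈ S := by
    intro k
    induction k with
    | zero => intro i j hij; have : i = j := Fin.ext (by omega); subst this; exact hE i
    | succ k ih =>
      intro i j hij
      have hlt : (i : ℕ) + k + 1 < n := by omega
      set j' : Fin n := ⟨(i : ℕ) + k, Nat.lt_of_succ_lt hlt⟩ with hj'
      have h1 : Matrix.single i j' (1:ℂ) ∈ S := ih i j' rfl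
      have h2 : Matrix.single j' j (1:ℂ) ∈ S := by
        have hmem := hstep ((i : ℕ) + k) hlt
        have hj : j = ⟨(i : ℕ) + k + 1, hlt⟩ := Fin.ext (by simp only [Fin.val_mk]; omega)
        rw [hj]; exact hmem
      have hmul := mul_mem h1 h2
      rwa [Matrix.single_mul_single_same, one_mul] at hmul
  -- all matrix units
  have hall : ∀ i j : Fin n, Matrix.single i j (1:ℂ) ∈ S := by
    intro i j
    rcases le_or_gt (i : ℕ) (j : ℕ) with hij | hij
    · exact hup ((j : ℕ) - (i : ℕ)) i j (by omega)
    · have hmem := star_mem (hup ((i : ℕ) - (j : ℕ)) j i (by omega))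
      have hst : star (Matrix.single j i (1:ℂ)) = Matrix.single i j 1 := by
        ext r s
        simp only [Matrix.star_apply, Matrix.single, Matrix.of_apply,
          apply_ite (star : ℂ → ℂ), star_one, star_zero]
        exact if_congr and_comm rfl rfl
      rwa [hst] at hmem
  -- conclude
  rw [eq_top_iff]
  intro x _
  rw [Matrix.matrix_eq_sum_single x]
  apply sum_mem; intro i _
  apply sum_mem; intro j _
  have heq : Matrix.single i j (x i j) = x i j • Matrix.single i j (1:ℂ) := by
    rw [Matrix.smul_single, smul_eq_mul, mul_one]
  rw [heq]
  exact SMulMemClass.smul_mem _ (hall i j)
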